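/- There exists an absolute constant c ≥ 1 such that for all real numbers x and t with x > 2 and 2x < t < x², c⁻¹ · 1/((x t)^{1/2} log(t/x)) ≤ ∫_{3/2}^{x} dv / (v^{1/2} (log v)(v x + t)) ≤ c · 1/((x t)^{1/2} log(t/x)). -/

import Mathlib

open MeasureTheory Real

lemma aux13 : (1/3:ℝ) ≤ Real.log (3/2) := by
  have h2 := Real.add_one_le_exp (-(1/3):ℝ)
  rw [Real.exp_neg] at h2
  have h4 : 0 < Real.exp (1/3:ℝ) := Real.exp_pos _
  have h1 : Real.exp (1/3:ℝ) ≤ 3/2 := by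
    have h5 := mul_le_mul_of_nonneg_left h2 h4.le
    rw [mul_inv_cancel₀ (ne_of_gt h4)] at h5
    nlinarith
  calc (1/3:ℝ) = Real.log (Real.exp (1/3)) := (Real.log_exp _).symm
  _ ≤ Real.log (3/2) := Real.log_le_log (Real.exp_pos _) h1

set_option maxHeartbeats 1000000 in
theorem stmt_19 :
    ∃ c : ℝ, 1 ≤ c ∧ ∀ x t : ℝ, 2 < x → 2 * x < t → t < x ^ 2 →
      c⁻¹ * (1 / (Real.sqrt (x * t) * Real.log (t / x)))
        ≤ (∫ v in (3/2 : ℝ)..x, 1 / (Real.sqrt v * Real.log v * (v * x + t))) ∧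
      (∫ v in (3/2 : ℝ)..x, 1 / (Real.sqrt v * Real.log v * (v * x + t)))
        ≤ c * (1 / (Real.sqrt (x * t) * Real.log (t / x))) := by
  refine ⟨100, by norm_num, ?_⟩
  intro x t hx h2x htx
  have hx0 : (0:ℝ) < x := by linarith
  have ht0 : (0:ℝ) < t := by linarith
  set s := t / x with hs
  have hs2 : 2 < s := by rw [hs, lt_div_iff₀ hx0]; linarith
  have hsx : s < x := by rw [hs, div_lt_iff₀ hx0]; nlinarith
  have hs0 : (0:ℝ) < s := by linarith
  set S := Real.sqrt s with hSdef
  have hS0 : (0:ℝ) < S := Real.sqrt_pos.mpr hs0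
  have hSS : S ^ 2 = s := Real.sq_sqrt hs0.le
  have hS1 : 1 < S := by rw [hSdef]; rw [show (1:ℝ) = Real.sqrt 1 by simp]
                         exact Real.sqrt_lt_sqrt (by norm_num) (by linarith)
  have hA : Real.sqrt (x * t) = x * S := by
    rw [hSdef, hs, show x * t = x ^ 2 * (t / x) by field_simp,
      Real.sqrt_mul (by positivity), Real.sqrt_sq hx0.le]
  set A := Real.sqrt (x * t) with hAdef
  have hA0 : (0:ℝ) < A := by rw [hA]; positivity
  have hSA : S * A = t := by
    rw [hA]
    calc S * (x * S) = x * S ^ 2 := by ring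
    _ = x * s := by rw [hSS]
    _ = t := by rw [hs]; field_simp
  set L := Real.log s with hL
  have hL0 : (0:ℝ) < L := Real.log_pos (by linarith)
  have hsxt : s * x = t := by rw [hs]; field_simp
  have hlogS : Real.log S = L / 2 := by rw [hSdef, Real.log_sqrt hs0.le, hL]
  have hSs : S ≤ s := by nlinarith [hSS, hS1]
  clear_value L
  clear_value A
  clear_value S
  clear_value s
  set f : ℝ → ℝ := fun v => 1 / (Real.sqrt v * Real.log v * (v * x + t)) with hf
  -- positivity of the denominator
  have hden : ∀ v : ℝ, 3/2 ≤ v → 0 < Real.sqrt v * Real.log v * (v * x + t) := by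
    intro v hv
    have h1 : 0 < Real.sqrt v := Real.sqrt_pos.mpr (by linarith)
    have h2 : 0 < Real.log v := Real.log_pos (by linarith)
    have h3 : 0 < v * x + t := by
      have : 0 < v * x := mul_pos (by linarith) hx0
      linarith
    positivity
  -- integrability of f on subintervals of [3/2, ∞)
  have hint : ∀ a b : ℝ, 3/2 ≤ a → 3/2 ≤ b → IntervalIntegrable f volume a b := by
    intro a b ha hb
    apply ContinuousOn.intervalIntegrable
    have hsub : ∀ v ∈ Set.uIcc a b, (3/2:ℝ) ≤ v := by
      intro v hv
      rcases Set.mem_uIcc.mp hv with ⟨h1, _⟩ | ⟨h1, _⟩ <;> linarith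
    apply ContinuousOn.div continuousOn_const
    · apply ContinuousOn.mul
      · apply ContinuousOn.mul Real.continuous_sqrt.continuousOn
        exact Real.continuousOn_log.mono (fun v hv => by
          have := hsub v hv; simp; linarith)
      · exact (Continuous.add (continuous_id.mul continuous_const)
          continuous_const).continuousOn
    · intro v hv
      exact (hden v (hsub v hv)).ne'
  -- nonnegativity of parts
  have hnn : ∀ a b : ℝ, 3/2 ≤ a → a ≤ b → 0 ≤ ∫ v in a..b, f v := by
    intro a b ha hab
    apply intervalIntegral.integral_nonneg hab
    intro v hv
    have := hden v (le_trans ha hv.1)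
    positivity
  -- comparison helper
  have hcomp : ∀ v c : ℝ, 0 < c → c ≤ Real.sqrt v * Real.log v * (v * x + t) →
      f v ≤ 1 / c := by
    intro v c hc h
    exact one_div_le_one_div_of_le hc h
  have hrpow : ∀ v : ℝ, 0 < v → v ^ (-(1/2):ℝ) = 1 / Real.sqrt v := by
    intro v hv
    rw [Real.rpow_neg hv.le, Real.sqrt_eq_rpow]
    norm_num
  have hrpow3 : ∀ v : ℝ, 0 < v → v ^ (-(3/2):ℝ) = 1 / (v * Real.sqrt v) := by
    intro v hv
    rw [Real.rpow_neg hv.le, show (3/2:ℝ) = 1 + 1/2 by norm_num, Real.rpow_add hv,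
      Real.rpow_one, Real.sqrt_eq_rpow]
    norm_num
  -- integral of v^(-1/2)
  have hint_half : ∀ a b : ℝ, 0 < a → a ≤ b →
      ∫ v in a..b, v ^ (-(1/2):ℝ) = 2 * Real.sqrt b - 2 * Real.sqrt a := by
    intro a b ha hab
    rw [integral_rpow (Or.inl (by norm_num))]
    rw [Real.sqrt_eq_rpow, Real.sqrt_eq_rpow]
    norm_num
    ring
  constructor
  · -- LOWER BOUND
    have hmid1 : (3/2:ℝ) ≤ 3 * s / 4 := by linarith
    have hmid2 : 3 * s / 4 ≤ s := by linarith
    have hsx' : s ≤ x := hsx.le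
    have e1 : (∫ v in (3/2:ℝ)..(3*s/4), f v) + (∫ v in (3*s/4)..s, f v)
        = ∫ v in (3/2:ℝ)..s, f v :=
      intervalIntegral.integral_add_adjacent_intervals
        (hint _ _ le_rfl hmid1) (hint _ _ hmid1 (by linarith))
    have e2 : (∫ v in (3/2:ℝ)..s, f v) + (∫ v in s..x, f v)
        = ∫ v in (3/2:ℝ)..x, f v :=
      intervalIntegral.integral_add_adjacent_intervals
        (hint _ _ le_rfl (by linarith)) (hint _ _ (by linarith) (by linarith))
    have hlow : (s/4) * (1 / (S * L * (2*t))) ≤ ∫ v in (3*s/4)..s, f v := by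
      have hmono : ∀ v ∈ Set.Icc (3*s/4) s, (fun _ : ℝ => 1 / (S * L * (2*t))) v ≤ f v := by
        intro v hv
        have hv1 : 3/2 ≤ v := le_trans hmid1 hv.1
        have hv2 : v ≤ s := hv.2
        have hd := hden v hv1
        have h1 : Real.sqrt v ≤ S := by rw [hSdef]; exact Real.sqrt_le_sqrt hv2
        have h2 : Real.log v ≤ L := by rw [hL]; exact Real.log_le_log (by linarith) hv2
        have h3 : v * x + t ≤ 2 * t := by
          have : v * x ≤ s * x := mul_le_mul_of_nonneg_right hv2 hx0.le
          linarith [hsxt]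
        have hlogv : 0 ≤ Real.log v := Real.log_nonneg (by linarith)
        have hvx : 0 ≤ v * x + t := by
          have : 0 < v * x := mul_pos (by linarith) hx0
          linarith
        have hd2 : Real.sqrt v * Real.log v * (v * x + t) ≤ S * L * (2*t) := by
          have hSL : Real.sqrt v * Real.log v ≤ S * L :=
            mul_le_mul h1 h2 hlogv hS0.le
          exact mul_le_mul hSL h3 hvx (by positivity)
        exact one_div_le_one_div_of_le hd hd2
      have := intervalIntegral.integral_mono_on hmid2
        (intervalIntegrable_const) (hint _ _ hmid1 (by linarith)) hmono
      rw [intervalIntegral.integral_const, smul_eq_mul] at this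
      calc (s/4) * (1 / (S * L * (2*t))) = (s - 3*s/4) * (1 / (S * L * (2*t))) := by ring
      _ ≤ _ := this
    have hkey : (100:ℝ)⁻¹ * (1 / (A * L)) ≤ (s/4) * (1 / (S * L * (2*t))) := by
      have heq : (s/4) * (1 / (S * L * (2*t))) = (1/8) * (1 / (A * L)) := by
        rw [← hSS, ← hSA]
        field_simp
        ring
      rw [heq]
      have : 0 < 1 / (A * L) := by positivity
      linarith
    calc (100:ℝ)⁻¹ * (1 / (A * L)) ≤ (s/4) * (1 / (S * L * (2*t))) := hkey
    _ ≤ ∫ v in (3*s/4)..s, f v := hlow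
    _ ≤ ∫ v in (3/2:ℝ)..x, f v := by
        rw [← e2, ← e1]
        have n1 := hnn (3/2) (3*s/4) le_rfl hmid1
        have n2 := hnn s x (by linarith) hsx'
        linarith
  · -- UPPER BOUND
    set q := Real.sqrt S with hq
    have hq0 : 0 < q := Real.sqrt_pos.mpr hS0
    have hqq : q ^ 2 = S := Real.sq_sqrt hS0.le
    have hlogq : Real.log q = L / 4 := by
      rw [hq, Real.log_sqrt hS0.le, hlogS]; ring
    have hLq : L ≤ 4 * q := by
      have := Real.log_le_sub_one_of_pos hq0
      rw [hlogq] at this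
      linarith
    clear_value q
    set m := max (3/2 : ℝ) S with hm
    have hm32 : (3/2:ℝ) ≤ m := le_max_left _ _
    have hmS : S ≤ m := le_max_right _ _
    have hms : m ≤ s := max_le (by linarith) hSs
    have hmq : Real.sqrt m ≤ 2 * q := by
      have h1 : m ≤ 4 * S := max_le (by linarith) (by linarith)
      calc Real.sqrt m ≤ Real.sqrt ((2*q)^2) := by
            apply Real.sqrt_le_sqrt; linarith [hqq, sq_nonneg q, sq_abs q,
              (by ring : (2*q)^2 = 4*q^2)]
      _ = 2 * q := Real.sqrt_sq (by positivity)
    clear_value m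
    have h13 : (1/3:ℝ) ≤ Real.log (3/2) := aux13
    -- part 1 : [3/2, m]
    have hU1 : (∫ v in (3/2:ℝ)..m, f v) ≤ (2 * Real.sqrt m) * (3 / t) := by
      have hmono : ∀ v ∈ Set.Icc (3/2:ℝ) m, f v ≤ (fun v : ℝ => v ^ (-(1/2):ℝ) * (3 / t)) v := by
        intro v hv
        have hv1 : (3/2:ℝ) ≤ v := hv.1
        have hv0 : (0:ℝ) < v := by linarith
        have hsq : 0 < Real.sqrt v := Real.sqrt_pos.mpr hv0
        have hlog : 1/3 ≤ Real.log v := le_trans h13 (Real.log_le_log (by norm_num) hv1)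
        have hlb : Real.sqrt v * (1/3) * t ≤ Real.sqrt v * Real.log v * (v * x + t) := by
          have h3 : t ≤ v * x + t := by
            have : 0 < v * x := mul_pos (by linarith) hx0
            linarith
          have h4 : Real.sqrt v * (1/3) ≤ Real.sqrt v * Real.log v :=
            mul_le_mul_of_nonneg_left hlog hsq.le
          calc Real.sqrt v * (1/3) * t ≤ Real.sqrt v * Real.log v * t :=
            mul_le_mul_of_nonneg_right h4 ht0.le
          _ ≤ Real.sqrt v * Real.log v * (v * x + t) := by
            apply mul_le_mul_of_nonneg_left h3
            exact mul_nonneg (Real.sqrt_nonneg v) (Real.log_nonneg (by linarith))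
        calc f v ≤ 1 / (Real.sqrt v * (1/3) * t) :=
              one_div_le_one_div_of_le (by positivity) hlb
        _ = v ^ (-(1/2):ℝ) * (3 / t) := by
              rw [hrpow v hv0, div_mul_div_comm, one_mul,
                div_eq_div_iff (mul_pos (mul_pos hsq (by norm_num : (0:ℝ) < 1/3)) ht0).ne'
                  (mul_pos hsq ht0).ne']
              ring
      have := intervalIntegral.integral_mono_on hm32
        (hint _ _ le_rfl (by linarith)) ((intervalIntegral.intervalIntegrable_rpow (a := 3/2) (b := m)
          (Or.inr (by intro h; rcases Set.mem_uIcc.mp h with ⟨h1,_⟩|⟨h1,_⟩ <;> linarith))).mul_const _) hmono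
      rw [intervalIntegral.integral_mul_const, hint_half _ _ (by norm_num) hm32] at this
      calc (∫ v in (3/2:ℝ)..m, f v)
          ≤ (2 * Real.sqrt m - 2 * Real.sqrt (3/2)) * (3 / t) := this
      _ ≤ (2 * Real.sqrt m) * (3 / t) := by
          have ht' : (0:ℝ) < 3 / t := by positivity
          apply mul_le_mul_of_nonneg_right ?_ ht'.le
          linarith [Real.sqrt_nonneg (3/2:ℝ)]
    -- part 2 : [m, s]
    have hU2 : (∫ v in m..s, f v) ≤ (2 * S) * (2 / (L * t)) := by
      have hmono : ∀ v ∈ Set.Icc m s, f v ≤ (fun v : ℝ => v ^ (-(1/2):ℝ) * (2 / (L * t))) v := by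
        intro v hv
        have hv1 : (3/2:ℝ) ≤ v := le_trans hm32 hv.1
        have hv0 : (0:ℝ) < v := by linarith
        have hsq : 0 < Real.sqrt v := Real.sqrt_pos.mpr hv0
        have hlog : L / 2 ≤ Real.log v := by
          calc L / 2 = Real.log S := hlogS.symm
          _ ≤ Real.log m := Real.log_le_log hS0 hmS
          _ ≤ Real.log v := Real.log_le_log (by linarith [hm32]) hv.1
        have hlb : Real.sqrt v * (L/2) * t ≤ Real.sqrt v * Real.log v * (v * x + t) := by
          have h3 : t ≤ v * x + t := by
            have : 0 < v * x := mul_pos (by linarith) hx0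
            linarith
          have h4 : Real.sqrt v * (L/2) ≤ Real.sqrt v * Real.log v :=
            mul_le_mul_of_nonneg_left hlog hsq.le
          calc Real.sqrt v * (L/2) * t ≤ Real.sqrt v * Real.log v * t :=
            mul_le_mul_of_nonneg_right h4 ht0.le
          _ ≤ Real.sqrt v * Real.log v * (v * x + t) := by
            apply mul_le_mul_of_nonneg_left h3
            exact mul_nonneg (Real.sqrt_nonneg v) (Real.log_nonneg (by linarith))
        calc f v ≤ 1 / (Real.sqrt v * (L/2) * t) :=
              one_div_le_one_div_of_le (by positivity) hlb
        _ = v ^ (-(1/2):ℝ) * (2 / (L * t)) := by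
              rw [hrpow v hv0, div_mul_div_comm, one_mul,
                div_eq_div_iff (mul_pos (mul_pos hsq (half_pos hL0)) ht0).ne'
                  (mul_pos hsq (mul_pos hL0 ht0)).ne']
              ring
      have := intervalIntegral.integral_mono_on hms
        (hint _ _ hm32 (by linarith)) ((intervalIntegral.intervalIntegrable_rpow (a := m) (b := s)
          (Or.inr (by intro h; rcases Set.mem_uIcc.mp h with ⟨h1,_⟩|⟨h1,_⟩ <;> linarith))).mul_const _) hmono
      rw [intervalIntegral.integral_mul_const, hint_half _ _ (by linarith) hms,
        ← hSdef] at this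
      calc (∫ v in m..s, f v) ≤ (2 * S - 2 * Real.sqrt m) * (2 / (L * t)) := this
      _ ≤ (2 * S) * (2 / (L * t)) := by
          have ht' : (0:ℝ) < 2 / (L * t) := by positivity
          apply mul_le_mul_of_nonneg_right ?_ ht'.le
          linarith [Real.sqrt_nonneg m]
    -- part 3 : [s, x]
    have hU3 : (∫ v in s..x, f v) ≤ (2 / S) * (1 / (x * L)) := by
      have hmono : ∀ v ∈ Set.Icc s x, f v ≤ (fun v : ℝ => v ^ (-(3/2):ℝ) * (1 / (x * L))) v := by
        intro v hv
        have hv1 : (3/2:ℝ) ≤ v := by linarith [hv.1]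
        have hv0 : (0:ℝ) < v := by linarith
        have hsq : 0 < Real.sqrt v := Real.sqrt_pos.mpr hv0
        have hlog : L ≤ Real.log v := by rw [hL]; exact Real.log_le_log hs0 hv.1
        have hlb : (v * Real.sqrt v) * L * x ≤ Real.sqrt v * Real.log v * (v * x + t) := by
          have h3 : v * x ≤ v * x + t := by linarith
          have h4 : Real.sqrt v * L ≤ Real.sqrt v * Real.log v :=
            mul_le_mul_of_nonneg_left hlog hsq.le
          have h5 : Real.sqrt v * L * (v * x) ≤ Real.sqrt v * Real.log v * (v * x + t) := by
            apply mul_le_mul h4 h3 (mul_nonneg (by linarith) hx0.le)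
              (mul_nonneg (Real.sqrt_nonneg v) (Real.log_nonneg (by linarith)))
          calc (v * Real.sqrt v) * L * x = Real.sqrt v * L * (v * x) := by ring
          _ ≤ _ := h5
        calc f v ≤ 1 / ((v * Real.sqrt v) * L * x) :=
              one_div_le_one_div_of_le (by positivity) hlb
        _ = v ^ (-(3/2):ℝ) * (1 / (x * L)) := by
              rw [hrpow3 v hv0, div_mul_div_comm, one_mul,
                div_eq_div_iff (mul_pos (mul_pos (mul_pos hv0 hsq) hL0) hx0).ne'
                  (mul_pos (mul_pos hv0 hsq) (mul_pos hx0 hL0)).ne']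
              ring
      have hi3 : ∫ v in s..x, (fun v : ℝ => v ^ (-(3/2):ℝ)) v
          = (x ^ (-(3/2)+1:ℝ) - s ^ (-(3/2)+1:ℝ)) / (-(3/2)+1) := by
        apply integral_rpow
        refine Or.inr ⟨by norm_num, ?_⟩
        intro h; rcases Set.mem_uIcc.mp h with ⟨h1,_⟩|⟨h1,_⟩ <;> linarith
      have := intervalIntegral.integral_mono_on hsx.le
        (hint _ _ (by linarith) (by linarith)) ((intervalIntegral.intervalIntegrable_rpow (a := s) (b := x)
          (Or.inr (by intro h; rcases Set.mem_uIcc.mp h with ⟨h1,_⟩|⟨h1,_⟩ <;> linarith))).mul_const _) hmono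
      rw [intervalIntegral.integral_mul_const, hi3] at this
      have hxrp : (0:ℝ) ≤ x ^ (-(3/2)+1:ℝ) := Real.rpow_nonneg hx0.le _
      have hsrp : s ^ (-(3/2)+1:ℝ) = 1 / S := by
        rw [show (-(3/2)+1:ℝ) = -(1/2) by norm_num, hrpow s hs0, hSdef]
      calc (∫ v in s..x, f v)
          ≤ (x ^ (-(3/2)+1:ℝ) - s ^ (-(3/2)+1:ℝ)) / (-(3/2)+1) * (1 / (x * L)) := this
      _ = (2 * s ^ (-(3/2)+1:ℝ) - 2 * x ^ (-(3/2)+1:ℝ)) * (1 / (x * L)) := by ring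
      _ ≤ (2 / S) * (1 / (x * L)) := by
          rw [hsrp]
          have hxL : (0:ℝ) < 1 / (x * L) := by positivity
          apply mul_le_mul_of_nonneg_right ?_ hxL.le
          have h2S : 2 * (1 / S) = 2 / S := by ring
          linarith [hxrp]
    -- combine
    have e1 : (∫ v in (3/2:ℝ)..m, f v) + (∫ v in m..s, f v) = ∫ v in (3/2:ℝ)..s, f v :=
      intervalIntegral.integral_add_adjacent_intervals
        (hint _ _ le_rfl (by linarith)) (hint _ _ (by linarith) (by linarith))
    have e2 : (∫ v in (3/2:ℝ)..s, f v) + (∫ v in s..x, f v) = ∫ v in (3/2:ℝ)..x, f v :=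
      intervalIntegral.integral_add_adjacent_intervals
        (hint _ _ le_rfl (by linarith)) (hint _ _ (by linarith) (by linarith))
    have hT1 : (2 * Real.sqrt m) * (3 / t) ≤ 48 * (1 / (A * L)) := by
      rw [show (2 * Real.sqrt m) * (3 / t) = (6 * Real.sqrt m) / t by ring,
        show (48:ℝ) * (1 / (A * L)) = 48 / (A * L) by ring,
        div_le_div_iff₀ ht0 (by positivity)]
      have hfact : Real.sqrt m * L ≤ (2 * q) * (4 * q) :=
        mul_le_mul hmq hLq hL0.le (by positivity)
      have hfact2 : A * (Real.sqrt m * L) ≤ A * ((2 * q) * (4 * q)) :=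
        mul_le_mul_of_nonneg_left hfact hA0.le
      have hAq : A * q ^ 2 = t := by rw [hqq]; linarith [hSA]
      nlinarith [hfact2, hAq]
    have hT2 : (2 * S) * (2 / (L * t)) = 4 * (1 / (A * L)) := by
      rw [← hSA]
      field_simp
      ring
    have hT3 : (2 / S) * (1 / (x * L)) = 2 * (1 / (A * L)) := by
      rw [hA]
      field_simp
    calc (∫ v in (3/2:ℝ)..x, f v)
        = (∫ v in (3/2:ℝ)..m, f v) + (∫ v in m..s, f v) + (∫ v in s..x, f v) := by
          rw [e1, e2]
    _ ≤ (2 * Real.sqrt m) * (3 / t) + (2 * S) * (2 / (L * t)) + (2 / S) * (1 / (x * L)) := by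
          linarith
    _ ≤ 48 * (1 / (A * L)) + 4 * (1 / (A * L)) + 2 * (1 / (A * L)) := by
          rw [hT2, hT3]; linarith
    _ ≤ 100 * (1 / (A * L)) := by
          have : 0 < 1 / (A * L) := by positivity
          linarith
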